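/- For λ > 0 and the hinge-loss-type lower-level problem min_{-w̄ ≤ w ≤ w̄} Σⱼ max(1 - bⱼ(wᵀaⱼ - c), 0) + (λ/2)‖w‖₂², strong Lagrangian duality holds: the optimal value equals max over dual variables (ρ, α₁ ≥ 0, α₂ ≥ 0) of -l_g*(-ρ, 0) - ‖ρ‖₂²/(2λ), where l_g(w,c) = Σⱼ max(1 - bⱼ(wᵀaⱼ - c), 0) + α₁ᵀ(w - w̄) + α₂ᵀ(-w - w̄) and l_g* is its conjugate in (w,c). -/

import Mathlib

open scoped BigOperators
open Finset

namespace SvmDuality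

variable {p J : ℕ}

noncomputable def mval (a : Fin J → Fin p → ℝ) (b : Fin J → ℝ) (w : Fin p → ℝ) (c : ℝ) (j : Fin J) : ℝ :=
  1 - b j * ((∑ i, w i * a j i) - c)

noncomputable def hinge (a : Fin J → Fin p → ℝ) (b : Fin J → ℝ) (w : Fin p → ℝ) (c : ℝ) : ℝ :=
  ∑ j, max (mval a b w c j) 0

noncomputable def Fobj (a : Fin J → Fin p → ℝ) (b : Fin J → ℝ) (lam : ℝ) (w : Fin p → ℝ) (c : ℝ) : ℝ :=
  hinge a b w c + lam / 2 * ∑ i, w i ^ 2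

def feas (wbar w : Fin p → ℝ) : Prop := ∀ i, -wbar i ≤ w i ∧ w i ≤ wbar i

lemma continuous_Fobj (a : Fin J → Fin p → ℝ) (b : Fin J → ℝ) (lam : ℝ) :
    Continuous (fun y : (Fin p → ℝ) × ℝ => Fobj a b lam y.1 y.2) := by
  unfold Fobj hinge mval
  fun_prop

lemma sum_bound (a : Fin J → Fin p → ℝ) (wbar w : Fin p → ℝ) (hw : feas wbar w) (j : Fin J) :
    |∑ i, w i * a j i| ≤ ∑ i, wbar i * |a j i| := by
  refine (Finset.abs_sum_le_sum_abs _ _).trans (Finset.sum_le_sum fun i _ => ?_)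
  rw [abs_mul]
  exact mul_le_mul_of_nonneg_right (abs_le.2 ⟨(hw i).1, (hw i).2⟩) (abs_nonneg _)

lemma clamp_le (a : Fin J → Fin p → ℝ) (b : Fin J → ℝ) (hb : ∀ j, b j = 1 ∨ b j = -1)
    (wbar : Fin p → ℝ) (hwbar : ∀ i, 0 < wbar i) (lam : ℝ)
    (w : Fin p → ℝ) (hw : feas wbar w) (c : ℝ) :
    Fobj a b lam w (max (-(1 + ∑ j, ∑ i, wbar i * |a j i|)) (min (1 + ∑ j, ∑ i, wbar i * |a j i|) c))
      ≤ Fobj a b lam w c := by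
  set M : ℝ := 1 + ∑ j, ∑ i, wbar i * |a j i| with hM
  have hMj : ∀ j : Fin J, 1 + ∑ i, wbar i * |a j i| ≤ M := by
    intro j
    have : ∑ i, wbar i * |a j i| ≤ ∑ j', ∑ i, wbar i * |a j' i| :=
      Finset.single_le_sum (f := fun j' => ∑ i, wbar i * |a j' i|)
        (fun j' _ => Finset.sum_nonneg fun i _ => mul_nonneg (hwbar i).le (abs_nonneg _))
        (Finset.mem_univ j)
    linarith
  have hM1 : (1:ℝ) ≤ M := by
    have : (0:ℝ) ≤ ∑ j, ∑ i, wbar i * |a j i| :=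
      Finset.sum_nonneg fun j _ => Finset.sum_nonneg fun i _ => mul_nonneg (hwbar i).le (abs_nonneg _)
    linarith
  unfold Fobj
  have key : hinge a b w (max (-M) (min M c)) ≤ hinge a b w c := by
    unfold hinge
    refine Finset.sum_le_sum fun j _ => ?_
    have hSb : |∑ i, w i * a j i| ≤ ∑ i, wbar i * |a j i| := sum_bound a wbar w hw j
    set S : ℝ := ∑ i, w i * a j i
    have habs : |S| ≤ M - 1 := le_trans hSb (by linarith [hMj j])
    rcases le_or_gt c (-M) with hc | hc
    · -- clamp = -M
      have hcl : max (-M) (min M c) = -M := by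
        have : min M c = c := min_eq_right (by linarith)
        rw [this]; exact max_eq_left (by linarith)
      rw [hcl]
      rcases hb j with h1 | h1
      · -- b = 1 : mval = 1 - (S - c), at c = -M nonpositive
        have : mval a b w (-M) j ≤ 0 := by
          unfold mval; rw [h1]
          have := abs_le.1 habs
          nlinarith
        rw [max_eq_right this]
        exact le_max_right _ _
      · -- b = -1 : mval = 1 + (S - c), increasing as c decreases; -M ≤ c
        unfold mval; rw [h1]
        refine max_le_max ?_ le_rfl
        nlinarith
    · rcases le_or_gt M c with hc2 | hc2
      · have hcl : max (-M) (min M c) = M := by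
          have : min M c = M := min_eq_left hc2
          rw [this]; exact max_eq_right (by linarith)
        rw [hcl]
        rcases hb j with h1 | h1
        · unfold mval; rw [h1]
          refine max_le_max ?_ le_rfl
          nlinarith
        · have : mval a b w M j ≤ 0 := by
            unfold mval; rw [h1]
            have := abs_le.1 habs
            nlinarith
          rw [max_eq_right this]
          exact le_max_right _ _
      · have hcl : max (-M) (min M c) = c := by
          have : min M c = c := min_eq_right hc2.le
          rw [this]; exact max_eq_right (by linarith)
        rw [hcl]
  linarith

lemma exists_min (a : Fin J → Fin p → ℝ) (b : Fin J → ℝ) (hb : ∀ j, b j = 1 ∨ b j = -1)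
    (wbar : Fin p → ℝ) (hwbar : ∀ i, 0 < wbar i) (lam : ℝ) :
    ∃ ws cs, feas wbar ws ∧ ∀ w c, feas wbar w → Fobj a b lam ws cs ≤ Fobj a b lam w c := by
  set M : ℝ := 1 + ∑ j, ∑ i, wbar i * |a j i| with hM
  have hM1 : (1:ℝ) ≤ M := by
    have : (0:ℝ) ≤ ∑ j, ∑ i, wbar i * |a j i| :=
      Finset.sum_nonneg fun j _ => Finset.sum_nonneg fun i _ => mul_nonneg (hwbar i).le (abs_nonneg _)
    linarith
  set K : Set ((Fin p → ℝ) × ℝ) :=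
    (Set.univ.pi fun i => Set.Icc (-(wbar i)) (wbar i)) ×ˢ Set.Icc (-M) M with hK
  have hKc : IsCompact K :=
    (isCompact_univ_pi fun i => isCompact_Icc).prod isCompact_Icc
  have hKne : K.Nonempty := by
    refine ⟨(fun _ => 0, 0), ?_⟩
    constructor
    · intro i _
      exact ⟨by simpa using (hwbar i).le, (hwbar i).le⟩
    · exact ⟨show -M ≤ (0:ℝ) by linarith, show (0:ℝ) ≤ M by linarith⟩
  obtain ⟨y, hyK, hymin⟩ := hKc.exists_isMinOn hKne (continuous_Fobj a b lam).continuousOn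
  refine ⟨y.1, y.2, ?_, ?_⟩
  · intro i
    have := hyK.1 i (Set.mem_univ i)
    exact ⟨this.1, this.2⟩
  · intro w c hw
    have hmem : ((w, max (-M) (min M c)) : (Fin p → ℝ) × ℝ) ∈ K := by
      constructor
      · intro i _
        exact ⟨(hw i).1, (hw i).2⟩
      · constructor
        · exact le_max_left _ _
        · exact max_le (by linarith) (min_le_left _ _)
    have h1 := hymin hmem
    have h2 := clamp_le a b hb wbar hwbar lam w hw c
    simpa using le_trans h1 h2

noncomputable def dotE (x y : (Fin p → ℝ) × ℝ) : ℝ := (∑ i, x.1 i * y.1 i) + x.2 * y.2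

lemma dotE_self_nonneg (x : (Fin p → ℝ) × ℝ) : 0 ≤ dotE x x :=
  add_nonneg (Finset.sum_nonneg fun i _ => mul_self_nonneg _) (mul_self_nonneg _)

lemma dotE_self_eq_zero {x : (Fin p → ℝ) × ℝ} (h : dotE x x = 0) : x = 0 := by
  unfold dotE at h
  have hsum : (∑ i, x.1 i * x.1 i) = 0 ∧ x.2 * x.2 = 0 := by
    constructor <;>
      nlinarith [Finset.sum_nonneg (fun i (_ : i ∈ Finset.univ) => mul_self_nonneg (x.1 i)),
        mul_self_nonneg x.2]
  have h1 : ∀ i, x.1 i = 0 := by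
    intro i
    have := (Finset.sum_eq_zero_iff_of_nonneg
      (fun i (_ : i ∈ Finset.univ) => mul_self_nonneg (x.1 i))).1 hsum.1 i (Finset.mem_univ i)
    exact mul_self_eq_zero.1 this
  have h2 : x.2 = 0 := mul_self_eq_zero.1 hsum.2
  exact Prod.ext (funext h1) h2

lemma dotE_expand (x v : (Fin p → ℝ) × ℝ) (t : ℝ) :
    dotE (x + t • v) (x + t • v) = dotE x x + 2 * t * dotE x v + t ^ 2 * dotE v v := by
  unfold dotE
  simp only [Prod.fst_add, Prod.snd_add, Prod.smul_fst, Prod.smul_snd, Pi.add_apply,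
    Pi.smul_apply, smul_eq_mul]
  have : ∀ i : Fin p, (x.1 i + t * v.1 i) * (x.1 i + t * v.1 i) =
      x.1 i * x.1 i + (2 * t) * (x.1 i * v.1 i) + t ^ 2 * (v.1 i * v.1 i) := by
    intro i; ring
  rw [Finset.sum_congr rfl fun i _ => this i]
  rw [Finset.sum_add_distrib, Finset.sum_add_distrib, ← Finset.mul_sum, ← Finset.mul_sum]
  ring

lemma dotE_sub_right (x y z : (Fin p → ℝ) × ℝ) : dotE x (y - z) = dotE x y - dotE x z := by
  unfold dotE
  simp only [Prod.fst_sub, Prod.snd_sub, Pi.sub_apply, mul_sub]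
  rw [Finset.sum_sub_distrib]
  ring

lemma continuous_dotE_self : Continuous (fun y : (Fin p → ℝ) × ℝ => dotE y y) := by
  unfold dotE; fun_prop

/-- Minimum-norm point of a closed convex nonempty set, with variational inequality. -/
lemma exists_min_dot (T : Set ((Fin p → ℝ) × ℝ)) (hT : IsClosed T) (hconv : Convex ℝ T)
    (hne : T.Nonempty) : ∃ z ∈ T, ∀ y ∈ T, dotE z z ≤ dotE z y := by
  obtain ⟨y₀, hy₀⟩ := hne
  set Q : ((Fin p → ℝ) × ℝ) → ℝ := fun y => dotE y y with hQ
  set K : Set ((Fin p → ℝ) × ℝ) := T ∩ {y | Q y ≤ Q y₀} with hKdef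
  have hKclosed : IsClosed K := hT.inter (isClosed_le continuous_dotE_self continuous_const)
  have hKbdd : Bornology.IsBounded K := by
    have hsub : K ⊆ Metric.closedBall 0 (1 + Real.sqrt (Q y₀)) := by
      intro y hy
      have hQy : Q y ≤ Q y₀ := hy.2
      have hcoord : ∀ (v : ℝ), v * v ≤ Q y → |v| ≤ Real.sqrt (Q y₀) := by
        intro v hv
        have : v ^ 2 ≤ Q y₀ := by nlinarith
        calc |v| = Real.sqrt (v ^ 2) := (Real.sqrt_sq_eq_abs v).symm
          _ ≤ Real.sqrt (Q y₀) := Real.sqrt_le_sqrt this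
      have hQnn : 0 ≤ Real.sqrt (Q y₀) := Real.sqrt_nonneg _
      rw [Metric.mem_closedBall, dist_zero_right]
      rw [Prod.norm_def]
      refine max_le ?_ ?_
      · refine (pi_norm_le_iff_of_nonneg (by linarith)).2 fun i => ?_
        have : y.1 i * y.1 i ≤ Q y := by
          have h2 : (0:ℝ) ≤ y.2 * y.2 := mul_self_nonneg _
          have h3 : y.1 i * y.1 i ≤ ∑ i', y.1 i' * y.1 i' :=
            Finset.single_le_sum (f := fun i' => y.1 i' * y.1 i')
              (fun i' _ => mul_self_nonneg _) (Finset.mem_univ i)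
          have hQy' : Q y = (∑ i', y.1 i' * y.1 i') + y.2 * y.2 := rfl
          linarith
        have := hcoord _ this
        rw [Real.norm_eq_abs]; linarith
      · have : y.2 * y.2 ≤ Q y := by
          have h3 : (0:ℝ) ≤ ∑ i', y.1 i' * y.1 i' :=
            Finset.sum_nonneg fun i' _ => mul_self_nonneg _
          have hQy' : Q y = (∑ i', y.1 i' * y.1 i') + y.2 * y.2 := rfl
          linarith
        have := hcoord _ this
        rw [Real.norm_eq_abs]; linarith
    exact Bornology.IsBounded.subset Metric.isBounded_closedBall hsub
  have hKcompact : IsCompact K := Metric.isCompact_of_isClosed_isBounded hKclosed hKbdd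
  have hKne : K.Nonempty := ⟨y₀, hy₀, Set.mem_setOf_eq ▸ le_rfl⟩
  obtain ⟨z, hzK, hzmin⟩ := hKcompact.exists_isMinOn hKne continuous_dotE_self.continuousOn
  refine ⟨z, hzK.1, ?_⟩
  have hzQ : ∀ y ∈ T, Q z ≤ Q y := by
    intro y hy
    rcases le_or_gt (Q y) (Q y₀) with h | h
    · exact hzmin (⟨hy, h⟩ : y ∈ K)
    · exact le_trans (hzmin (⟨hy₀, Set.mem_setOf_eq ▸ le_rfl⟩ : y₀ ∈ K)) h.le
  intro y hy
  -- variational inequality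
  have hD : 0 ≤ dotE z (y - z) := by
    by_contra hD
    push_neg at hD
    set D : ℝ := dotE z (y - z) with hDdef
    set Qv : ℝ := dotE (y - z) (y - z) with hQv
    have hQvnn : 0 ≤ Qv := dotE_self_nonneg _
    set t : ℝ := min 1 (-D / (Qv + 1)) with ht
    have ht0 : 0 < t := lt_min one_pos (div_pos (by linarith) (by linarith))
    have ht1 : t ≤ 1 := min_le_left _ _
    have htD : t ≤ -D / (Qv + 1) := min_le_right _ _
    have hmem : z + t • (y - z) ∈ T := by
      have := hconv.add_smul_sub_mem hzK.1 hy ⟨ht0.le, ht1⟩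
      exact this
    have hQle : Q z ≤ Q (z + t • (y - z)) := hzQ _ hmem
    rw [show Q (z + t • (y - z)) = Q z + 2 * t * D + t ^ 2 * Qv from dotE_expand z (y - z) t]
      at hQle
    have htQv : t * (Qv + 1) ≤ -D := (le_div_iff₀ (by linarith : (0:ℝ) < Qv + 1)).1 htD
    nlinarith
  rw [dotE_sub_right] at hD
  linarith


section KKT

variable {p J : ℕ}

set_option maxHeartbeats 1000000 in
lemma kkt (a : Fin J → Fin p → ℝ) (b : Fin J → ℝ) (wbar : Fin p → ℝ)
    (hwbar : ∀ i, 0 < wbar i) (lam : ℝ) (hlam : 0 < lam) (ws : Fin p → ℝ) (cs : ℝ)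
    (hfeas : feas wbar ws)
    (hmin : ∀ w c, feas wbar w → Fobj a b lam ws cs ≤ Fobj a b lam w c) :
    ∃ s : Fin J → ℝ,
      (∀ j, 0 ≤ s j ∧ s j ≤ 1) ∧
      (∀ j, 0 < mval a b ws cs j → s j = 1) ∧
      (∀ j, mval a b ws cs j < 0 → s j = 0) ∧
      (∑ j, s j * b j) = 0 ∧
      (∀ i, (0 < lam * ws i - ∑ j, s j * b j * a j i → ws i = -(wbar i)) ∧
            (lam * ws i - ∑ j, s j * b j * a j i < 0 → ws i = wbar i)) := by
  classical
  set m : Fin J → ℝ := mval a b ws cs with hm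
  set slo : Fin J → ℝ := fun j => if 0 < m j then 1 else 0 with hslo
  set shi : Fin J → ℝ := fun j => if m j < 0 then 0 else 1 with hshi
  set Sset : Set (Fin J → ℝ) := Set.univ.pi fun j => Set.Icc (slo j) (shi j) with hSset
  set Cif : Fin p → Set ℝ :=
    fun i => if ws i = wbar i then Set.Ici 0 else if ws i = -(wbar i) then Set.Iic 0
      else {0} with hCif
  set Cset : Set (Fin p → ℝ) := Set.univ.pi Cif with hCset
  set Φ : ((Fin J → ℝ) × (Fin p → ℝ)) → (Fin p → ℝ) × ℝ :=
    fun sβ => (fun i => lam * ws i - (∑ j, sβ.1 j * b j * a j i) + sβ.2 i,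
      ∑ j, sβ.1 j * b j) with hΦ
  set T : Set ((Fin p → ℝ) × ℝ) := Φ '' (Sset ×ˢ Cset) with hT
  have h0Cif : ∀ i, (0:ℝ) ∈ Cif i := by
    intro i
    simp only [hCif]
    split_ifs <;> simp
  have h0C : (0 : Fin p → ℝ) ∈ Cset := fun i _ => h0Cif i
  have hsloS : slo ∈ Sset := by
    intro j _
    simp only [hslo, hshi, Set.mem_Icc]
    split_ifs with h1 h2 <;> first
      | (exact absurd h1 (not_lt.2 h2.le))
      | (constructor <;> norm_num)
  -- main claim: 0 ∈ T
  have hmain : (0 : (Fin p → ℝ) × ℝ) ∈ T := by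
    by_contra h0T
    -- T is convex
    have hconv : Convex ℝ T := by
      rintro y1 ⟨⟨s1, β1⟩, ⟨hs1, hβ1⟩, rfl⟩ y2 ⟨⟨s2, β2⟩, ⟨hs2, hβ2⟩, rfl⟩ u v hu hv huv
      refine ⟨(u • s1 + v • s2, u • β1 + v • β2), ⟨?_, ?_⟩, ?_⟩
      · intro j _
        have := (convex_Icc (slo j) (shi j)) (hs1 j (Set.mem_univ j))
          (hs2 j (Set.mem_univ j)) hu hv huv
        simpa using this
      · intro i _
        have hCc : Convex ℝ (Cif i) := by
          simp only [hCif]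
          split_ifs
          · exact convex_Ici 0
          · exact convex_Iic 0
          · exact convex_singleton 0
        have := hCc (hβ1 i (Set.mem_univ i)) (hβ2 i (Set.mem_univ i)) hu hv huv
        simpa using this
      · have hsum : ∀ (c : Fin J → ℝ),
            (∑ j, (u * s1 j + v * s2 j) * c j)
              = u * (∑ j, s1 j * c j) + v * (∑ j, s2 j * c j) := by
          intro c
          rw [Finset.mul_sum, Finset.mul_sum, ← Finset.sum_add_distrib]
          exact Finset.sum_congr rfl fun j _ => by ring
        refine Prod.ext (funext fun i => ?_) ?_
        · show lam * ws i - (∑ j, (u • s1 + v • s2) j * b j * a j i) + (u • β1 + v • β2) i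
            = (u • Φ (s1, β1) + v • Φ (s2, β2)).1 i
          have h1 : (∑ j, (u • s1 + v • s2) j * b j * a j i)
              = ∑ j, (u * s1 j + v * s2 j) * (b j * a j i) := by
            refine Finset.sum_congr rfl fun j _ => ?_
            simp [mul_assoc]
          rw [h1, hsum (fun j => b j * a j i)]
          simp only [Prod.fst_add, Prod.smul_fst, Pi.add_apply, Pi.smul_apply, smul_eq_mul, hΦ]
          have h2 : ∀ (s : Fin J → ℝ), (∑ j, s j * b j * a j i) = ∑ j, s j * (b j * a j i) := by
            intro s; exact Finset.sum_congr rfl fun j _ => by ring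
          rw [h2 s1, h2 s2]
          linear_combination (lam * ws i) * huv.symm
        · show (∑ j, (u • s1 + v • s2) j * b j) = (u • Φ (s1, β1) + v • Φ (s2, β2)).2
          have h1 : (∑ j, (u • s1 + v • s2) j * b j)
              = ∑ j, (u * s1 j + v * s2 j) * b j := by
            refine Finset.sum_congr rfl fun j _ => ?_
            simp
          rw [h1, hsum b]
          simp [hΦ]
    -- T is closed
    have hScomp : IsCompact Sset := isCompact_univ_pi fun j => isCompact_Icc
    have hCifclosed : ∀ i, IsClosed (Cif i) := by
      intro i
      simp only [hCif]
      split_ifs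
      · exact isClosed_Ici
      · exact isClosed_Iic
      · exact isClosed_singleton
    have hTclosed : IsClosed T := by
      refine isClosed_of_closure_subset ?_
      intro y hy
      rw [mem_closure_iff_seq_limit] at hy
      obtain ⟨yn, hyn, hylim⟩ := hy
      choose x hxmem hxeq using fun n => hyn n
      obtain ⟨s, hsS, φ, hφmono, hslim⟩ := hScomp.tendsto_subseq (fun n => (hxmem n).1)
      set β : Fin p → ℝ := fun i => y.1 i - lam * ws i + ∑ j, s j * b j * a j i with hβ
      have hylimφ : Filter.Tendsto (fun n => yn (φ n)) Filter.atTop (nhds y) :=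
        hylim.comp hφmono.tendsto_atTop
      have hβn : ∀ n i, (x (φ n)).2 i
          = (yn (φ n)).1 i - lam * ws i + ∑ j, (x (φ n)).1 j * b j * a j i := by
        intro n i
        have := congrArg (fun q => q.1 i) (hxeq (φ n))
        simp only [hΦ] at this
        linarith [this]
      have hsumlim : ∀ i, Filter.Tendsto (fun n => ∑ j, (x (φ n)).1 j * b j * a j i)
          Filter.atTop (nhds (∑ j, s j * b j * a j i)) := by
        intro i
        refine tendsto_finset_sum _ fun j _ => ?_
        exact ((((continuous_apply j).tendsto s).comp hslim).mul_const (b j)).mul_const (a j i)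
      have hy1lim : ∀ i, Filter.Tendsto (fun n => (yn (φ n)).1 i) Filter.atTop (nhds (y.1 i)) :=
        fun i => (((continuous_apply i).comp continuous_fst).tendsto y).comp hylimφ
      have hβlim : ∀ i, Filter.Tendsto (fun n => (x (φ n)).2 i) Filter.atTop (nhds (β i)) := by
        intro i
        have : Filter.Tendsto (fun n => (yn (φ n)).1 i - lam * ws i
            + ∑ j, (x (φ n)).1 j * b j * a j i) Filter.atTop
            (nhds (y.1 i - lam * ws i + ∑ j, s j * b j * a j i)) :=
          ((hy1lim i).sub tendsto_const_nhds).add (hsumlim i)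
        refine this.congr fun n => (hβn n i).symm
      have hβC : β ∈ Cset := by
        intro i _
        exact (hCifclosed i).mem_of_tendsto (hβlim i)
          (Filter.Eventually.of_forall fun n => (hxmem (φ n)).2 i (Set.mem_univ i))
      have hy2 : y.2 = ∑ j, s j * b j := by
        have t1 : Filter.Tendsto (fun n => (yn (φ n)).2) Filter.atTop (nhds y.2) :=
          (continuous_snd.tendsto y).comp hylimφ
        have t2 : Filter.Tendsto (fun n => (yn (φ n)).2) Filter.atTop
            (nhds (∑ j, s j * b j)) := by
          have : ∀ n, (yn (φ n)).2 = ∑ j, (x (φ n)).1 j * b j := by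
            intro n
            have := congrArg Prod.snd (hxeq (φ n))
            simp only [hΦ] at this
            exact this.symm
          refine Filter.Tendsto.congr (fun n => (this n).symm) ?_
          exact tendsto_finset_sum _ fun j _ =>
            (((continuous_apply j).tendsto s).comp hslim).mul_const (b j)
        exact tendsto_nhds_unique t1 t2
      refine ⟨(s, β), ⟨hsS, hβC⟩, ?_⟩
      refine Prod.ext (funext fun i => ?_) ?_
      · show lam * ws i - (∑ j, s j * b j * a j i) + β i = y.1 i
        simp only [hβ]; ring
      · exact hy2.symm
    have hTne : T.Nonempty := ⟨Φ (slo, 0), ⟨(slo, 0), ⟨hsloS, h0C⟩, rfl⟩⟩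
    obtain ⟨z, hzT, hzVI⟩ := exists_min_dot T hTclosed hconv hTne
    set u : Fin p → ℝ := z.1 with hu
    set d : ℝ := z.2 with hd
    have hc0pos : 0 < dotE z z := by
      rcases lt_or_eq_of_le (dotE_self_nonneg z) with h | h
      · exact h
      · exact absurd (hzT) (by rw [← dotE_self_eq_zero h.symm] at h0T; exact h0T)
    set c₀ : ℝ := dotE z z with hc₀
    set qq : Fin J → ℝ := fun j => b j * (d - ∑ i, u i * a j i) with hqq
    -- dot product formula
    have hdot : ∀ sβ : (Fin J → ℝ) × (Fin p → ℝ),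
        dotE z (Φ sβ) = lam * (∑ i, u i * ws i) + (∑ i, u i * sβ.2 i)
          + ∑ j, sβ.1 j * qq j := by
      rintro ⟨s, β⟩
      show (∑ i, u i * (lam * ws i - (∑ j, s j * b j * a j i) + β i))
          + d * (∑ j, s j * b j)
        = lam * (∑ i, u i * ws i) + (∑ i, u i * β i) + ∑ j, s j * qq j
      have e1 : (∑ i, u i * (lam * ws i - (∑ j, s j * b j * a j i) + β i))
          = (∑ i, lam * (u i * ws i)) - (∑ i, u i * (∑ j, s j * b j * a j i))
            + ∑ i, u i * β i := by
        rw [← Finset.sum_sub_distrib, ← Finset.sum_add_distrib]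
        exact Finset.sum_congr rfl fun i _ => by ring
      have e2 : (∑ i, u i * (∑ j, s j * b j * a j i))
          = ∑ j, s j * (b j * (∑ i, u i * a j i)) := by
        simp_rw [Finset.mul_sum]
        rw [Finset.sum_comm]
        exact Finset.sum_congr rfl fun j _ => Finset.sum_congr rfl fun i _ => by ring
      have e3 : d * (∑ j, s j * b j) = ∑ j, s j * (b j * d) := by
        rw [Finset.mul_sum]
        exact Finset.sum_congr rfl fun j _ => by ring
      rw [e1, e2, e3, ← Finset.mul_sum]
      have e4 : (∑ j, s j * qq j)
          = (∑ j, s j * (b j * d)) - ∑ j, s j * (b j * (∑ i, u i * a j i)) := by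
        rw [← Finset.sum_sub_distrib]
        refine Finset.sum_congr rfl fun j _ => ?_
        simp only [hqq]
        ring
      rw [e4]
      ring
    -- VI instantiated
    have hVI : ∀ s ∈ Sset, ∀ β ∈ Cset,
        c₀ ≤ lam * (∑ i, u i * ws i) + (∑ i, u i * β i) + ∑ j, s j * qq j := by
      intro s hs β hβ
      have := hzVI (Φ (s, β)) ⟨(s, β), ⟨hs, hβ⟩, rfl⟩
      rwa [hdot (s, β)] at this
    -- sign facts on u
    have husign : ∀ i, (ws i = wbar i → 0 ≤ u i) ∧ (ws i = -(wbar i) → u i ≤ 0) := by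
      intro i0
      have base := hVI slo hsloS 0 h0C
      simp only [Pi.zero_apply, mul_zero, Finset.sum_const_zero, add_zero] at base
      set A : ℝ := lam * (∑ i, u i * ws i) + ∑ j, slo j * qq j with hA
      have hgen : ∀ σ : ℝ, ((σ = 1 ∧ ws i0 = wbar i0) ∨ (σ = -1 ∧ ws i0 = -(wbar i0))) →
          ∀ R : ℝ, 0 ≤ R → c₀ ≤ A + R * (σ * u i0) := by
        intro σ hσ R hR
        have hβmem : (R • (Pi.single i0 σ : Fin p → ℝ)) ∈ Cset := by
          intro i _
          rcases eq_or_ne i i0 with rfl | hne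
          · simp only [Pi.smul_apply, Pi.single_eq_same, smul_eq_mul]
            rcases hσ with ⟨rfl, hw⟩ | ⟨rfl, hw⟩
            · simp only [hCif, if_pos hw]
              simpa using hR
            · have hw1 : ws i ≠ wbar i := by
                intro hcon
                have := hwbar i
                rw [hcon] at hw
                linarith
              simp only [hCif, if_neg hw1, if_pos hw]
              simp only [Set.mem_Iic]
              nlinarith
          · simpa [Pi.single_eq_of_ne hne] using h0Cif i
        have := hVI slo hsloS _ hβmem
        have hsum : (∑ i, u i * (R • (Pi.single i0 σ : Fin p → ℝ)) i) = R * (σ * u i0) := by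
          have : ∀ i, u i * (R • (Pi.single i0 σ : Fin p → ℝ)) i
              = if i = i0 then u i * (R * σ) else 0 := by
            intro i
            rcases eq_or_ne i i0 with rfl | hne
            · simp [Pi.single_eq_same, smul_eq_mul]
            · simp [Pi.single_eq_of_ne hne, hne]
          rw [Finset.sum_congr rfl fun i _ => this i, Finset.sum_ite_eq' Finset.univ i0]
          simp only [Finset.mem_univ, if_true]
          ring
        rw [hsum] at this
        calc c₀ ≤ lam * (∑ i, u i * ws i) + R * (σ * u i0) + ∑ j, slo j * qq j := this
          _ = A + R * (σ * u i0) := by rw [hA]; ring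
      have key : ∀ σ : ℝ, ((σ = 1 ∧ ws i0 = wbar i0) ∨ (σ = -1 ∧ ws i0 = -(wbar i0))) →
          0 ≤ σ * u i0 := by
        intro σ hσ
        by_contra hneg
        push_neg at hneg
        have h1 : c₀ ≤ A := by simpa using hgen σ hσ 0 le_rfl
        set R : ℝ := (A - c₀ + 1) / (-(σ * u i0)) with hR
        have hRnn : 0 ≤ R := div_nonneg (by linarith) (by linarith)
        have h2 := hgen σ hσ R hRnn
        have hne : σ * u i0 ≠ 0 := ne_of_lt hneg
        have h3 : R * (σ * u i0) = -(A - c₀ + 1) := by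
          rw [hR, div_neg, neg_mul, div_mul_cancel₀ _ hne]
        rw [h3] at h2
        linarith
      constructor
      · intro hw
        have := key 1 (Or.inl ⟨rfl, hw⟩)
        linarith
      · intro hw
        have := key (-1) (Or.inr ⟨rfl, hw⟩)
        linarith
    -- the descent direction
    set sstar : Fin J → ℝ := fun j => if 0 < m j then 1 else if m j < 0 then 0
      else if qq j < 0 then 1 else 0 with hsstar
    have hsstarS : sstar ∈ Sset := by
      intro j _
      simp only [hsstar, hslo, hshi, Set.mem_Icc]
      split_ifs <;> first
        | (exfalso; linarith)
        | (constructor <;> norm_num)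
    set con : Fin J → ℝ := fun j => if 0 < m j then -qq j else if m j < 0 then 0
      else max (-qq j) 0 with hcon
    have hsq : ∀ j, sstar j * qq j = -(con j) := by
      intro j
      simp only [hsstar, hcon]
      split_ifs with h1 h2 h3
      · ring
      · ring
      · rw [max_eq_left (by linarith)]; ring
      · rw [max_eq_right (by linarith)]; ring
    have hkey : lam * (∑ i, u i * ws i) - (∑ j, con j) ≥ c₀ := by
      have := hVI sstar hsstarS 0 h0C
      simp only [Pi.zero_apply, mul_zero, Finset.sum_const_zero, add_zero] at this
      have h2 : (∑ j, sstar j * qq j) = -∑ j, con j := by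
        rw [← Finset.sum_neg_distrib]
        exact Finset.sum_congr rfl fun j _ => hsq j
      rw [h2] at this
      linarith
    -- small-step descent contradiction
    set L : ℝ := lam / 2 * ∑ i, u i * u i with hL
    have hLnn : 0 ≤ L := by
      have h1 : (0:ℝ) ≤ ∑ i, u i * u i := Finset.sum_nonneg fun i _ => mul_self_nonneg _
      have h2 : (0:ℝ) ≤ lam / 2 := by linarith
      exact mul_nonneg h2 h1
    have hsmall : ∀ ε : ℝ, 0 < ε → ∀ᶠ τ in nhdsWithin (0:ℝ) (Set.Ioi 0), τ < ε := fun ε hε =>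
      eventually_nhdsWithin_of_eventually_nhds (eventually_lt_nhds hε)
    have hmemIoi : ∀ᶠ τ in nhdsWithin (0:ℝ) (Set.Ioi 0), τ ∈ Set.Ioi (0:ℝ) :=
      self_mem_nhdsWithin
    have hev_feas : ∀ᶠ τ in nhdsWithin (0:ℝ) (Set.Ioi 0), ∀ i,
        -(wbar i) ≤ ws i + τ * (-(u i)) ∧ ws i + τ * (-(u i)) ≤ wbar i := by
      rw [Filter.eventually_all]
      intro i
      rcases lt_trichotomy (u i) 0 with hui | hui | hui
      · have hwslt : ws i < wbar i := by
          rcases lt_or_eq_of_le (hfeas i).2 with h | h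
          · exact h
          · exact absurd ((husign i).1 h) (not_le.2 hui)
        filter_upwards [hsmall ((wbar i - ws i) / (-(u i)))
          (div_pos (by linarith) (by linarith)), hmemIoi] with τ hτ hτ0
        have hτ0' : (0:ℝ) < τ := hτ0
        have hmul : τ * (-(u i)) < wbar i - ws i :=
          (lt_div_iff₀ (by linarith : (0:ℝ) < -(u i))).1 hτ
        constructor
        · nlinarith [(hfeas i).1]
        · linarith
      · filter_upwards [hmemIoi] with τ _
        simp only [hui, neg_zero, mul_zero, add_zero]
        exact ⟨(hfeas i).1, (hfeas i).2⟩
      · have hwslt : -(wbar i) < ws i := by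
          rcases lt_or_eq_of_le (hfeas i).1 with h | h
          · exact h
          · exact absurd ((husign i).2 h.symm) (not_le.2 hui)
        filter_upwards [hsmall ((ws i + wbar i) / (u i))
          (div_pos (by linarith) hui), hmemIoi] with τ hτ hτ0
        have hτ0' : (0:ℝ) < τ := hτ0
        have hmul : τ * u i < ws i + wbar i := (lt_div_iff₀ hui).1 hτ
        constructor
        · linarith
        · nlinarith [(hfeas i).2]
    have hev_j : ∀ᶠ τ in nhdsWithin (0:ℝ) (Set.Ioi 0), ∀ j,
        (0 < m j → 0 ≤ m j + τ * (-(qq j))) ∧ (m j < 0 → m j + τ * (-(qq j)) ≤ 0) := by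
      rw [Filter.eventually_all]
      intro j
      rcases lt_trichotomy (m j) 0 with hmj | hmj | hmj
      · rcases lt_or_ge (qq j) 0 with hq | hq
        · filter_upwards [hsmall (m j / qq j) (div_pos_of_neg_of_neg hmj hq), hmemIoi]
            with τ hτ hτ0
          have hmul : m j < τ * qq j := (lt_div_iff_of_neg hq).1 hτ
          exact ⟨fun h => absurd h (not_lt.2 hmj.le), fun _ => by linarith⟩
        · filter_upwards [hmemIoi] with τ hτ0
          have hτ0' : (0:ℝ) < τ := hτ0
          have : 0 ≤ τ * qq j := mul_nonneg hτ0'.le hq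
          exact ⟨fun h => absurd h (not_lt.2 hmj.le), fun _ => by linarith⟩
      · filter_upwards [hmemIoi] with τ _
        constructor
        · intro h; rw [hmj] at h; exact absurd h (lt_irrefl 0)
        · intro h; rw [hmj] at h; exact absurd h (lt_irrefl 0)
      · rcases lt_or_ge 0 (qq j) with hq | hq
        · filter_upwards [hsmall (m j / qq j) (div_pos hmj hq), hmemIoi] with τ hτ hτ0
          have hmul : τ * qq j < m j := (lt_div_iff₀ hq).1 hτ
          exact ⟨fun _ => by linarith, fun h => absurd h (not_lt.2 hmj.le)⟩
        · filter_upwards [hmemIoi] with τ hτ0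
          have hτ0' : (0:ℝ) < τ := hτ0
          have : τ * qq j ≤ 0 := mul_nonpos_of_nonneg_of_nonpos hτ0'.le hq
          exact ⟨fun _ => by linarith, fun h => absurd h (not_lt.2 hmj.le)⟩
    have hev_quad : ∀ᶠ τ in nhdsWithin (0:ℝ) (Set.Ioi 0), τ * L ≤ c₀ / 2 := by
      have hεpos : 0 < c₀ / (2 * (L + 1)) := div_pos hc0pos (by linarith)
      filter_upwards [hsmall _ hεpos, hmemIoi] with τ hτ hτ0
      have h1 : τ * L ≤ c₀ / (2 * (L + 1)) * L :=
        mul_le_mul_of_nonneg_right hτ.le hLnn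
      have h2 : c₀ / (2 * (L + 1)) * L ≤ c₀ / (2 * (L + 1)) * (L + 1) :=
        mul_le_mul_of_nonneg_left (by linarith) hεpos.le
      have h3 : c₀ / (2 * (L + 1)) * (L + 1) = c₀ / 2 := by
        field_simp
      linarith
    obtain ⟨τ, hτfeas, hτj, hτquad, hτmem⟩ :=
      ((hev_feas.and (hev_j.and (hev_quad.and hmemIoi)))).exists
    have hτpos : (0:ℝ) < τ := hτmem
    have hfeasτ : feas wbar (fun i => ws i + τ * (-(u i))) := fun i => hτfeas i
    -- margin identity at the perturbed point
    have hmval : ∀ j, mval a b (fun i => ws i + τ * (-(u i))) (cs + τ * (-d)) j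
        = m j + τ * (-(qq j)) := by
      intro j
      have hmj : m j = 1 - b j * ((∑ i, ws i * a j i) - cs) := rfl
      have hqqj : qq j = b j * (d - ∑ i, u i * a j i) := rfl
      show 1 - b j * ((∑ i, (ws i + τ * (-(u i))) * a j i) - (cs + τ * (-d))) = _
      have hsum : (∑ i, (ws i + τ * (-(u i))) * a j i)
          = (∑ i, ws i * a j i) - τ * (∑ i, u i * a j i) := by
        have he : ∀ i, (ws i + τ * (-(u i))) * a j i
            = ws i * a j i - τ * (u i * a j i) := fun i => by ring
        rw [Finset.sum_congr rfl fun i _ => he i, Finset.sum_sub_distrib, ← Finset.mul_sum]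
      rw [hsum, hmj, hqqj]
      ring
    -- per-term hinge bound
    have hhinge : ∀ j, max (mval a b (fun i => ws i + τ * (-(u i))) (cs + τ * (-d)) j) 0
        ≤ max (m j) 0 + τ * con j := by
      intro j
      rw [hmval j]
      rcases lt_trichotomy (m j) 0 with h | h | h
      · rw [max_eq_right ((hτj j).2 h), max_eq_right h.le]
        have hc : con j = 0 := by
          simp only [hcon]
          rw [if_neg (by linarith), if_pos h]
        rw [hc]
        linarith
      · have hc : con j = max (-(qq j)) 0 := by
          simp only [hcon]
          rw [if_neg (by simp [h]), if_neg (by simp [h])]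
        rw [h, hc]
        have h1 : τ * (-(qq j)) ≤ τ * max (-(qq j)) 0 :=
          mul_le_mul_of_nonneg_left (le_max_left _ _) hτpos.le
        have h2 : (0:ℝ) ≤ τ * max (-(qq j)) 0 :=
          mul_nonneg hτpos.le (le_max_right _ _)
        rw [zero_add, max_self, zero_add]
        exact max_le h1 h2
      · have h0 : 0 ≤ m j + τ * (-(qq j)) := (hτj j).1 h
        rw [max_eq_left h0, max_eq_left h.le]
        have hc : con j = -(qq j) := by
          simp only [hcon]
          rw [if_pos h]
        rw [hc]
    -- quadratic expansion
    have hquadsum : (∑ i, (ws i + τ * (-(u i))) ^ 2)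
        = (∑ i, ws i ^ 2) - τ * (2 * ∑ i, u i * ws i) + τ ^ 2 * (∑ i, u i * u i) := by
      have he : ∀ i, (ws i + τ * (-(u i))) ^ 2
          = ws i ^ 2 - τ * (2 * (u i * ws i)) + τ ^ 2 * (u i * u i) := fun i => by ring
      rw [Finset.sum_congr rfl fun i _ => he i, Finset.sum_add_distrib,
        Finset.sum_sub_distrib, ← Finset.mul_sum, ← Finset.mul_sum, ← Finset.mul_sum]
    -- descent
    have hFle : Fobj a b lam (fun i => ws i + τ * (-(u i))) (cs + τ * (-d))
        ≤ Fobj a b lam ws cs - τ * (c₀ / 2) := by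
      unfold Fobj hinge
      have hsum1 : (∑ j, max (mval a b (fun i => ws i + τ * (-(u i))) (cs + τ * (-d)) j) 0)
          ≤ (∑ j, max (m j) 0) + τ * ∑ j, con j := by
        calc (∑ j, max (mval a b (fun i => ws i + τ * (-(u i))) (cs + τ * (-d)) j) 0)
            ≤ ∑ j, (max (m j) 0 + τ * con j) := Finset.sum_le_sum fun j _ => hhinge j
          _ = (∑ j, max (m j) 0) + τ * ∑ j, con j := by
              rw [Finset.sum_add_distrib, ← Finset.mul_sum]
      have hsum2 : lam / 2 * (∑ i, (ws i + τ * (-(u i))) ^ 2)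
          = lam / 2 * (∑ i, ws i ^ 2) - τ * (lam * ∑ i, u i * ws i) + τ * (τ * L) := by
        rw [hquadsum, hL]
        ring
      have hterm : τ * (∑ j, con j) - τ * (lam * ∑ i, u i * ws i) ≤ τ * (-c₀) := by
        have := mul_le_mul_of_nonneg_left (by linarith [hkey] :
          (∑ j, con j) - lam * (∑ i, u i * ws i) ≤ -c₀) hτpos.le
        linarith [this]
      have hquad' : τ * (τ * L) ≤ τ * (c₀ / 2) :=
        mul_le_mul_of_nonneg_left hτquad hτpos.le
      have hmsum : (∑ j, max (m j) 0) = ∑ j, max (mval a b ws cs j) 0 := rfl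
      calc (∑ j, max (mval a b (fun i => ws i + τ * (-(u i))) (cs + τ * (-d)) j) 0)
            + lam / 2 * (∑ i, (ws i + τ * (-(u i))) ^ 2)
          ≤ ((∑ j, max (m j) 0) + τ * ∑ j, con j)
            + (lam / 2 * (∑ i, ws i ^ 2) - τ * (lam * ∑ i, u i * ws i) + τ * (τ * L)) := by
            rw [← hsum2]; exact add_le_add hsum1 le_rfl
        _ ≤ (∑ j, max (m j) 0) + lam / 2 * (∑ i, ws i ^ 2) + τ * (-c₀) + τ * (c₀ / 2) := by
            linarith [hterm, hquad']
        _ ≤ (∑ j, max (mval a b ws cs j) 0) + lam / 2 * (∑ i, ws i ^ 2) - τ * (c₀ / 2) := by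
            rw [← hmsum]
            have hr : τ * (-c₀) + τ * (c₀ / 2) = -(τ * (c₀ / 2)) := by ring
            linarith [hr]
    have hcontr := hmin (fun i => ws i + τ * (-(u i))) (cs + τ * (-d)) hfeasτ
    have : 0 < τ * (c₀ / 2) := mul_pos hτpos (by linarith)
    linarith [hFle, hcontr]
  -- unpack 0 ∈ T
  obtain ⟨⟨s, β⟩, ⟨hsS, hβC⟩, heq⟩ := hmain
  have heq1 : ∀ i, lam * ws i - (∑ j, s j * b j * a j i) + β i = 0 := by
    intro i
    exact congrArg (fun q => q.1 i) heq
  have heq2 : (∑ j, s j * b j) = 0 := congrArg Prod.snd heq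
  refine ⟨s, ?_, ?_, ?_, heq2, ?_⟩
  · intro j
    have := hsS j (Set.mem_univ j)
    simp only [Set.mem_Icc, hslo, hshi] at this
    constructor
    · rcases this with ⟨h1, _⟩
      split_ifs at h1 with h2
      · linarith
      · exact h1
    · rcases this with ⟨_, h2⟩
      split_ifs at h2 with h3
      · linarith
      · exact h2
  · intro j hj
    have := hsS j (Set.mem_univ j)
    simp only [Set.mem_Icc, hslo, hshi] at this
    rw [if_pos hj, if_neg (not_lt.2 (le_of_lt hj))] at this
    linarith [this.1, this.2]
  · intro j hj
    have := hsS j (Set.mem_univ j)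
    simp only [Set.mem_Icc, hslo, hshi] at this
    rw [if_neg (not_lt.2 (le_of_lt hj)), if_pos hj] at this
    linarith [this.1, this.2]
  · intro i
    have hβi := hβC i (Set.mem_univ i)
    have hβval : β i = -(lam * ws i - ∑ j, s j * b j * a j i) := by
      have := heq1 i
      linarith
    constructor
    · intro hpos
      have hβneg : β i < 0 := by rw [hβval]; linarith
      simp only [hCif] at hβi
      split_ifs at hβi with h1 h2
      · simp only [Set.mem_Ici] at hβi; linarith
      · exact h2
      · simp only [Set.mem_singleton_iff] at hβi; linarith
    · intro hneg
      have hβpos : 0 < β i := by rw [hβval]; linarith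
      simp only [hCif] at hβi
      split_ifs at hβi with h1 h2
      · exact h1
      · simp only [Set.mem_Iic] at hβi; linarith
      · simp only [Set.mem_singleton_iff] at hβi; linarith

end KKT

end SvmDuality

open SvmDuality in
set_option maxHeartbeats 1000000 in
/-- Strong Lagrangian duality for the box-constrained hinge-loss lower-level problem:
`min_{-w̄ ≤ w ≤ w̄} Σⱼ max(1 - bⱼ(wᵀaⱼ - c), 0) + (λ/2)‖w‖₂²` equals
`max_{ρ, α₁ ≥ 0, α₂ ≥ 0} -l_g*(-ρ, 0) - ‖ρ‖₂²/(2λ)`, where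
`l_g(w,c) = Σⱼ max(1 - bⱼ(wᵀaⱼ - c), 0) + α₁ᵀ(w - w̄) + α₂ᵀ(-w - w̄)` and `l_g*` is its
Fenchel conjugate in `(w, c)`. -/
theorem svm_lower_level_strong_duality (p J : ℕ)
    (a : Fin J → Fin p → ℝ) (b : Fin J → ℝ) (hb : ∀ j, b j = 1 ∨ b j = -1)
    (wbar : Fin p → ℝ) (hwbar : ∀ i, 0 < wbar i) (lam : ℝ) (hlam : 0 < lam) :
    (⨅ w : {w : Fin p → ℝ // ∀ i, -wbar i ≤ w i ∧ w i ≤ wbar i}, ⨅ c : ℝ,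
        (((∑ j, max (1 - b j * ((∑ i, (w : Fin p → ℝ) i * a j i) - c)) 0) +
          lam / 2 * ∑ i, ((w : Fin p → ℝ) i) ^ 2 : ℝ) : EReal)) =
      ⨆ ρ : Fin p → ℝ, ⨆ α₁ : {α : Fin p → ℝ // ∀ i, 0 ≤ α i},
        ⨆ α₂ : {α : Fin p → ℝ // ∀ i, 0 ≤ α i},
        (-(⨆ w : Fin p → ℝ, ⨆ c : ℝ,
            (((∑ i, (-ρ i) * w i) + (0 : ℝ) * c -
              ((∑ j, max (1 - b j * ((∑ i, w i * a j i) - c)) 0) +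
                (∑ i, (α₁ : Fin p → ℝ) i * (w i - wbar i)) +
                (∑ i, (α₂ : Fin p → ℝ) i * (-(w i) - wbar i))) : ℝ) : EReal)) -
          (((∑ i, (ρ i) ^ 2) / (2 * lam) : ℝ) : EReal)) := by
  classical
  obtain ⟨ws, cs, hfeasws, hminF⟩ := exists_min a b hb wbar hwbar lam
  obtain ⟨s, hsbd, hs1, hs0, hsb, hsign⟩ := kkt a b wbar hwbar lam hlam ws cs hfeasws hminF
  set R : ℝ := Fobj a b lam ws cs with hRdef
  set g : Fin p → ℝ := fun i => ∑ j, s j * b j * a j i with hg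
  set t : Fin p → ℝ := fun i => lam * ws i - g i with ht
  set ρ : Fin p → ℝ := fun i => lam * ws i with hρ
  set A1 : Fin p → ℝ := fun i => max (-(t i)) 0 with hA1
  set A2 : Fin p → ℝ := fun i => max (t i) 0 with hA2
  have hA1nn : ∀ i, 0 ≤ A1 i := fun i => le_max_right _ _
  have hA2nn : ∀ i, 0 ≤ A2 i := fun i => le_max_right _ _
  have htdef : ∀ i, t i = lam * ws i - g i := fun i => by rw [ht]
  have hρdef : ∀ i, ρ i = lam * ws i := fun i => by rw [hρ]
  have hsign' : ∀ i, (0 < t i → ws i = -(wbar i)) ∧ (t i < 0 → ws i = wbar i) := by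
    intro i
    have h1 := (hsign i).1
    have h2 := (hsign i).2
    have he : lam * ws i - ∑ j, s j * b j * a j i = t i := by rw [htdef i, hg]
    rw [he] at h1 h2
    exact ⟨h1, h2⟩
  have hstat : ∀ i, t i + A1 i - A2 i = 0 := by
    intro i
    simp only [hA1, hA2]
    rcases le_or_gt (t i) 0 with h | h
    · rw [max_eq_left (by linarith : (0:ℝ) ≤ -(t i)), max_eq_right h]; ring
    · rw [max_eq_right (by linarith : -(t i) ≤ (0:ℝ)), max_eq_left h.le]; ring
  have hcs1 : ∀ i, A1 i * (ws i - wbar i) = 0 := by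
    intro i
    rcases lt_or_ge (t i) 0 with h | h
    · rw [(hsign' i).2 h]; ring
    · have : A1 i = 0 := by
        simp only [hA1]; exact max_eq_right (by linarith)
      rw [this]; ring
  have hcs2 : ∀ i, A2 i * (-(ws i) - wbar i) = 0 := by
    intro i
    rcases lt_or_ge 0 (t i) with h | h
    · rw [(hsign' i).1 h]; ring
    · have : A2 i = 0 := by
        simp only [hA2]; exact max_eq_right h
      rw [this]; ring
  -- per-term subgradient inequality
  have hsub : ∀ (w : Fin p → ℝ) (c : ℝ) (j : Fin J),
      max (mval a b ws cs j) 0 + s j * (mval a b w c j - mval a b ws cs j)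
        ≤ max (mval a b w c j) 0 := by
    intro w c j
    rcases lt_trichotomy (mval a b ws cs j) 0 with h | h | h
    · rw [hs0 j h, max_eq_right h.le]
      simpa using le_max_right (mval a b w c j) 0
    · rw [h]
      have hb1 := (hsbd j).1
      have hb2 := (hsbd j).2
      rcases le_or_gt 0 (mval a b w c j) with h2 | h2
      · have h3 : s j * (mval a b w c j - 0) ≤ mval a b w c j := by nlinarith
        have h4 := le_max_left (mval a b w c j) 0
        simp only [max_self]
        linarith
      · have h3 : s j * (mval a b w c j - 0) ≤ 0 := by nlinarith
        have h4 := le_max_right (mval a b w c j) 0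
        simp only [max_self]
        linarith
    · rw [hs1 j h, max_eq_left h.le, one_mul]
      linarith [le_max_left (mval a b w c j) 0]
  -- sum swap
  have hswap : ∀ (v : Fin p → ℝ),
      (∑ j, s j * (b j * ∑ i, v i * a j i)) = ∑ i, v i * g i := by
    intro v
    simp_rw [Finset.mul_sum]
    rw [Finset.sum_comm]
    refine Finset.sum_congr rfl fun i _ => ?_
    rw [hg, Finset.mul_sum]
    exact Finset.sum_congr rfl fun j _ => by ring
  have hlin : ∀ (w : Fin p → ℝ) (c : ℝ),
      (∑ j, s j * (mval a b w c j - mval a b ws cs j))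
        = -∑ i, (w i - ws i) * g i := by
    intro w c
    have he : ∀ j, s j * (mval a b w c j - mval a b ws cs j)
        = -(s j * (b j * (∑ i, (w i - ws i) * a j i))) + (s j * b j) * (c - cs) := by
      intro j
      have h1 : mval a b w c j - mval a b ws cs j
          = -(b j * (∑ i, (w i - ws i) * a j i)) + b j * (c - cs) := by
        unfold mval
        have h2 : (∑ i, (w i - ws i) * a j i)
            = (∑ i, w i * a j i) - ∑ i, ws i * a j i := by
          rw [← Finset.sum_sub_distrib]
          exact Finset.sum_congr rfl fun i _ => by ring
        rw [h2]; ring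
      rw [h1]; ring
    rw [Finset.sum_congr rfl fun j _ => he j, Finset.sum_add_distrib, ← Finset.sum_mul, hsb,
      zero_mul, add_zero, Finset.sum_neg_distrib]
    exact congrArg Neg.neg (hswap (fun i => w i - ws i))
  have hz1' : (∑ i, A1 i * (ws i - wbar i)) = 0 := Finset.sum_eq_zero fun i _ => hcs1 i
  have hz2' : (∑ i, A2 i * (-(ws i) - wbar i)) = 0 := Finset.sum_eq_zero fun i _ => hcs2 i
  -- main inequality (I): (ws, cs) maximizes the conjugate expression
  have hI : ∀ (w : Fin p → ℝ) (c : ℝ),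
      (∑ i, (-ρ i) * w i) + (0:ℝ) * c -
          (hinge a b w c + (∑ i, A1 i * (w i - wbar i)) + (∑ i, A2 i * (-(w i) - wbar i)))
        ≤ (∑ i, (-ρ i) * ws i) + (0:ℝ) * cs -
          (hinge a b ws cs + (∑ i, A1 i * (ws i - wbar i))
            + (∑ i, A2 i * (-(ws i) - wbar i))) := by
    intro w c
    have h1 : hinge a b ws cs + (∑ j, s j * (mval a b w c j - mval a b ws cs j))
        ≤ hinge a b w c := by
      unfold hinge
      rw [← Finset.sum_add_distrib]
      exact Finset.sum_le_sum fun j _ => hsub w c j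
    rw [hlin w c] at h1
    have hz1 : (∑ i, A1 i * (w i - wbar i)) = ∑ i, A1 i * (w i - ws i) :=
      Finset.sum_congr rfl fun i _ => by linear_combination hcs1 i
    have hz2 : (∑ i, A2 i * (-(w i) - wbar i)) = -∑ i, A2 i * (w i - ws i) := by
      rw [← Finset.sum_neg_distrib]
      exact Finset.sum_congr rfl fun i _ => by linear_combination hcs2 i
    have hz3 : (∑ i, (-ρ i) * w i) = (∑ i, (-ρ i) * ws i) - ∑ i, ρ i * (w i - ws i) := by
      rw [← Finset.sum_sub_distrib]
      exact Finset.sum_congr rfl fun i _ => by ring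
    have hcancel : (∑ i, A1 i * (w i - ws i)) - (∑ i, A2 i * (w i - ws i))
        + (∑ i, ρ i * (w i - ws i)) - (∑ i, (w i - ws i) * g i) = 0 := by
      rw [← Finset.sum_sub_distrib, ← Finset.sum_add_distrib, ← Finset.sum_sub_distrib]
      refine Finset.sum_eq_zero fun i _ => ?_
      have h2 := hstat i
      have h3 : ρ i - g i = t i := by rw [htdef i, hρdef i]
      linear_combination (w i - ws i) * h2 + (w i - ws i) * h3
    rw [hz1, hz2, hz3, hz1', hz2']
    linarith
  -- main inequality (II): weak duality at the primal optimum
  have hII : ∀ (ρ' A1' A2' : Fin p → ℝ), (∀ i, 0 ≤ A1' i) → (∀ i, 0 ≤ A2' i) →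
      -((∑ i, (-ρ' i) * ws i) + (0:ℝ) * cs -
          (hinge a b ws cs + (∑ i, A1' i * (ws i - wbar i))
            + (∑ i, A2' i * (-(ws i) - wbar i))))
        - (∑ i, (ρ' i) ^ 2) / (2 * lam) ≤ R := by
    intro ρ' A1' A2' hA1' hA2'
    have ha : (∑ i, A1' i * (ws i - wbar i)) ≤ 0 :=
      Finset.sum_nonpos fun i _ =>
        mul_nonpos_of_nonneg_of_nonpos (hA1' i) (by linarith [(hfeasws i).2])
    have hb2 : (∑ i, A2' i * (-(ws i) - wbar i)) ≤ 0 :=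
      Finset.sum_nonpos fun i _ =>
        mul_nonpos_of_nonneg_of_nonpos (hA2' i) (by linarith [(hfeasws i).1])
    have hyoung : (∑ i, ρ' i * ws i) - (∑ i, (ρ' i) ^ 2) / (2 * lam)
        ≤ lam / 2 * ∑ i, ws i ^ 2 := by
      have per : ∀ i, ρ' i * ws i - (ρ' i) ^ 2 / (2 * lam) ≤ lam / 2 * ws i ^ 2 := by
        intro i
        have key : ρ' i * ws i - lam / 2 * ws i ^ 2 ≤ (ρ' i) ^ 2 / (2 * lam) := by
          rw [le_div_iff₀ (by linarith : (0:ℝ) < 2 * lam)]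
          nlinarith [sq_nonneg (ρ' i - lam * ws i)]
        linarith
      have hsum := Finset.sum_le_sum fun i (_ : i ∈ Finset.univ) => per i
      rw [Finset.sum_sub_distrib, ← Finset.sum_div, ← Finset.mul_sum] at hsum
      exact hsum
    have hneg : (∑ i, (-ρ' i) * ws i) = -∑ i, ρ' i * ws i := by
      rw [← Finset.sum_neg_distrib]
      exact Finset.sum_congr rfl fun i _ => by ring
    have hRval : R = hinge a b ws cs + lam / 2 * ∑ i, ws i ^ 2 := rfl
    rw [hneg, hRval]
    linarith
  -- real identity: value of the dual objective at the constructed multipliers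
  have he1 : (∑ i, (-ρ i) * ws i) = -(lam * ∑ i, ws i ^ 2) := by
    calc (∑ i, (-ρ i) * ws i) = ∑ i, -(lam * ws i ^ 2) :=
          Finset.sum_congr rfl fun i _ => by rw [hρdef i]; ring
      _ = -∑ i, lam * ws i ^ 2 := Finset.sum_neg_distrib _
      _ = -(lam * ∑ i, ws i ^ 2) := by rw [← Finset.mul_sum]
  have he2 : (∑ i, (ρ i) ^ 2) = lam ^ 2 * ∑ i, ws i ^ 2 := by
    calc (∑ i, (ρ i) ^ 2) = ∑ i, lam ^ 2 * ws i ^ 2 :=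
          Finset.sum_congr rfl fun i _ => by rw [hρdef i]; ring
      _ = lam ^ 2 * ∑ i, ws i ^ 2 := by rw [← Finset.mul_sum]
  have hRval : R = hinge a b ws cs + lam / 2 * ∑ i, ws i ^ 2 := rfl
  have hreal : -((∑ i, (-ρ i) * ws i) + (0:ℝ) * cs -
        (hinge a b ws cs + (∑ i, A1 i * (ws i - wbar i))
          + (∑ i, A2 i * (-(ws i) - wbar i))))
      - (∑ i, (ρ i) ^ 2) / (2 * lam) = R := by
    rw [he1, he2, hz1', hz2', hRval]
    field_simp
    ring
  -- EReal assembly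
  have hLHS : (⨅ w : {w : Fin p → ℝ // ∀ i, -wbar i ≤ w i ∧ w i ≤ wbar i}, ⨅ c : ℝ,
      (((∑ j, max (1 - b j * ((∑ i, (w : Fin p → ℝ) i * a j i) - c)) 0) +
        lam / 2 * ∑ i, ((w : Fin p → ℝ) i) ^ 2 : ℝ) : EReal)) = ((R : ℝ) : EReal) := by
    apply le_antisymm
    · exact iInf_le_of_le ⟨ws, hfeasws⟩ (iInf_le_of_le cs le_rfl)
    · exact le_iInf fun w => le_iInf fun c => EReal.coe_le_coe_iff.2 (hminF w c w.2)
  rw [hLHS]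
  apply le_antisymm
  · -- strong duality direction
    refine le_iSup_of_le ρ (le_iSup_of_le ⟨A1, hA1nn⟩ (le_iSup_of_le ⟨A2, hA2nn⟩ ?_))
    show ((R : ℝ) : EReal) ≤
      -(⨆ w : Fin p → ℝ, ⨆ c : ℝ,
          (((∑ i, (-ρ i) * w i) + (0 : ℝ) * c -
            ((∑ j, max (1 - b j * ((∑ i, w i * a j i) - c)) 0) +
              (∑ i, A1 i * (w i - wbar i)) +
              (∑ i, A2 i * (-(w i) - wbar i))) : ℝ) : EReal)) -
        (((∑ i, (ρ i) ^ 2) / (2 * lam) : ℝ) : EReal)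
    have hsup : (⨆ w : Fin p → ℝ, ⨆ c : ℝ,
        (((∑ i, (-ρ i) * w i) + (0 : ℝ) * c -
          ((∑ j, max (1 - b j * ((∑ i, w i * a j i) - c)) 0) +
            (∑ i, A1 i * (w i - wbar i)) +
            (∑ i, A2 i * (-(w i) - wbar i))) : ℝ) : EReal))
        = (((∑ i, (-ρ i) * ws i) + (0:ℝ) * cs -
            (hinge a b ws cs + (∑ i, A1 i * (ws i - wbar i))
              + (∑ i, A2 i * (-(ws i) - wbar i))) : ℝ) : EReal) := by
      apply le_antisymm
      · exact iSup_le fun w => iSup_le fun c => EReal.coe_le_coe_iff.2 (hI w c)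
      · exact le_iSup_of_le ws (le_iSup_of_le cs le_rfl)
    rw [hsup, ← EReal.coe_neg, ← EReal.coe_sub]
    exact EReal.coe_le_coe_iff.2 (le_of_eq hreal.symm)
  · -- weak duality direction
    refine iSup_le fun ρ' => iSup_le fun α₁' => iSup_le fun α₂' => ?_
    have hlow : ((((∑ i, (-ρ' i) * ws i) + (0:ℝ) * cs -
          ((∑ j, max (1 - b j * ((∑ i, ws i * a j i) - cs)) 0) +
            (∑ i, (α₁' : Fin p → ℝ) i * (ws i - wbar i)) +
            (∑ i, (α₂' : Fin p → ℝ) i * (-(ws i) - wbar i)))) : ℝ) : EReal)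
        ≤ ⨆ w : Fin p → ℝ, ⨆ c : ℝ,
            (((∑ i, (-ρ' i) * w i) + (0 : ℝ) * c -
              ((∑ j, max (1 - b j * ((∑ i, w i * a j i) - c)) 0) +
                (∑ i, (α₁' : Fin p → ℝ) i * (w i - wbar i)) +
                (∑ i, (α₂' : Fin p → ℝ) i * (-(w i) - wbar i))) : ℝ) : EReal) :=
      le_iSup_of_le ws (le_iSup_of_le cs le_rfl)
    refine le_trans (EReal.sub_le_sub (EReal.neg_le_neg_iff.2 hlow) le_rfl) ?_
    rw [← EReal.coe_neg, ← EReal.coe_sub]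
    exact EReal.coe_le_coe_iff.2
      (hII ρ' (α₁' : Fin p → ℝ) (α₂' : Fin p → ℝ) α₁'.2 α₂'.2)
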